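/- Let A be a convex subset of a real vector space and f : A → W a map into a real vector space W that preserves barycentric coordinates on segments, i.e., f((1-λ)a + λb) = (1-λ)f(a) + λ f(b) for all a,b ∈ A and λ ∈ [0,1]. Then f extends uniquely to an affine transformation from the affine span of A to W. -/

import Mathlib

lemma stmt3_comb {V W : Type*} [AddCommGroup V] [Module ℝ V] [AddCommGroup W] [Module ℝ W]
    {A : Set V} (hA : Convex ℝ A) {f : V → W}
    (hf : ∀ a ∈ A, ∀ b ∈ A, ∀ lam : ℝ, lam ∈ Set.Icc (0:ℝ) 1 →
      f ((1 - lam) • a + lam • b) = (1 - lam) • f a + lam • f b)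
    {ι : Type*} (t : Finset ι) (z : ι → V) :
    ∀ (w : ι → ℝ), (∀ i ∈ t, 0 ≤ w i) → (∑ i ∈ t, w i = 1) → (∀ i ∈ t, z i ∈ A) →
    f (∑ i ∈ t, w i • z i) = ∑ i ∈ t, w i • f (z i) := by
  classical
  induction t using Finset.induction_on with
  | empty => intro w _ h1 _; simp at h1
  | @insert a t ha ih =>
    intro w h0 h1 hz
    have hwa : 0 ≤ w a := h0 a (Finset.mem_insert_self a t)
    have hza : z a ∈ A := hz a (Finset.mem_insert_self a t)
    have h0' : ∀ i ∈ t, 0 ≤ w i := fun i hi => h0 i (Finset.mem_insert_of_mem hi)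
    have hz' : ∀ i ∈ t, z i ∈ A := fun i hi => hz i (Finset.mem_insert_of_mem hi)
    set s : ℝ := ∑ i ∈ t, w i with hs
    have hsum : w a + s = 1 := by rw [hs, ← Finset.sum_insert ha]; exact h1
    rw [Finset.sum_insert ha, Finset.sum_insert ha]
    by_cases hs0 : s = 0
    · have hwz : ∀ i ∈ t, w i = 0 := by
        intro i hi
        have := (Finset.sum_eq_zero_iff_of_nonneg h0').mp (by rw [← hs, hs0]) i hi
        exact this
      have hwa1 : w a = 1 := by rw [hs0] at hsum; linarith
      have e1 : (∑ i ∈ t, w i • z i) = 0 := Finset.sum_eq_zero fun i hi => by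
        rw [hwz i hi, zero_smul]
      have e2 : (∑ i ∈ t, w i • f (z i)) = 0 := Finset.sum_eq_zero fun i hi => by
        rw [hwz i hi, zero_smul]
      rw [e1, e2, add_zero, add_zero, hwa1, one_smul, one_smul]
    · have hspos : 0 < s := lt_of_le_of_ne (Finset.sum_nonneg h0') (Ne.symm hs0)
      set w' : ι → ℝ := fun i => w i / s with hw'
      have h0'' : ∀ i ∈ t, 0 ≤ w' i := fun i hi => div_nonneg (h0' i hi) hspos.le
      have h1'' : ∑ i ∈ t, w' i = 1 := by
        rw [hw']; simp only []
        rw [← Finset.sum_div, ← hs, div_self hs0]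
      set b : V := ∑ i ∈ t, w' i • z i with hb
      have hbA : b ∈ A := hA.sum_mem h0'' h1'' hz'
      have hfb : f b = ∑ i ∈ t, w' i • f (z i) := ih w' h0'' h1'' hz'
      have hdecomp : ∑ i ∈ t, w i • z i = s • b := by
        rw [hb, Finset.smul_sum]
        refine Finset.sum_congr rfl fun i hi => ?_
        rw [hw', smul_smul, mul_div_cancel₀ _ hs0]
      have hwa' : w a = 1 - s := by linarith
      have key := hf (z a) hza b hbA s ⟨hspos.le, by linarith⟩
      rw [hdecomp, hwa', key, hfb, Finset.smul_sum]
      congr 1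
      refine Finset.sum_congr rfl fun i hi => ?_
      rw [hw', smul_smul, mul_div_cancel₀ _ hs0]

lemma stmt3_rel {V W : Type*} [AddCommGroup V] [Module ℝ V] [AddCommGroup W] [Module ℝ W]
    {A : Set V} (hA : Convex ℝ A) {f : V → W}
    (hf : ∀ a ∈ A, ∀ b ∈ A, ∀ lam : ℝ, lam ∈ Set.Icc (0:ℝ) 1 →
      f ((1 - lam) • a + lam • b) = (1 - lam) • f a + lam • f b)
    {ι : Type*} (t : Finset ι) (z : ι → V) (c : ι → ℝ)
    (hz : ∀ i ∈ t, z i ∈ A)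
    (hc0 : ∑ i ∈ t, c i = 0) (hcz : ∑ i ∈ t, c i • z i = 0) :
    ∑ i ∈ t, c i • f (z i) = 0 := by
  classical
  set u : ι → ℝ := fun i => max (c i) 0 with hu
  set v : ι → ℝ := fun i => max (-c i) 0 with hv
  have hcuv : ∀ i, c i = u i - v i := fun i => by
    rw [hu, hv]; rcases le_total (c i) 0 with h | h
    · simp [max_eq_right h, max_eq_left (by linarith : (0:ℝ) ≤ -c i)]
    · simp [max_eq_left h, max_eq_right (by linarith : -c i ≤ 0)]
  have hu0 : ∀ i ∈ t, 0 ≤ u i := fun i _ => le_max_right _ _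
  have hv0 : ∀ i ∈ t, 0 ≤ v i := fun i _ => le_max_right _ _
  set m : ℝ := ∑ i ∈ t, u i with hm
  have hmv : ∑ i ∈ t, v i = m := by
    have h1 : ∑ i ∈ t, (u i - v i) = 0 := by
      calc ∑ i ∈ t, (u i - v i) = ∑ i ∈ t, c i :=
            Finset.sum_congr rfl fun i _ => (hcuv i).symm
        _ = 0 := hc0
    rw [Finset.sum_sub_distrib] at h1
    rw [hm]; linarith
  have huvz : ∑ i ∈ t, u i • z i = ∑ i ∈ t, v i • z i := by
    have h1 : ∑ i ∈ t, (u i • z i - v i • z i) = 0 := by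
      calc ∑ i ∈ t, (u i • z i - v i • z i) = ∑ i ∈ t, c i • z i :=
            Finset.sum_congr rfl fun i _ => by rw [hcuv i, sub_smul]
        _ = 0 := hcz
    rw [Finset.sum_sub_distrib] at h1
    exact sub_eq_zero.mp h1
  have goal' : ∑ i ∈ t, u i • f (z i) = ∑ i ∈ t, v i • f (z i) := by
    by_cases hm0 : m = 0
    · have hvu : ∀ i ∈ t, u i = 0 :=
        (Finset.sum_eq_zero_iff_of_nonneg hu0).mp (by rw [← hm]; exact hm0)
      have hvv : ∀ i ∈ t, v i = 0 :=
        (Finset.sum_eq_zero_iff_of_nonneg hv0).mp (by rw [hmv]; exact hm0)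
      rw [Finset.sum_eq_zero fun i hi => by rw [hvu i hi, zero_smul],
          Finset.sum_eq_zero fun i hi => by rw [hvv i hi, zero_smul]]
    · have hmpos : 0 < m := lt_of_le_of_ne (Finset.sum_nonneg hu0) (Ne.symm hm0)
      let w₁ : ι → ℝ := fun i => u i / m
      let w₂ : ι → ℝ := fun i => v i / m
      have hw₁0 : ∀ i ∈ t, 0 ≤ w₁ i := fun i hi => div_nonneg (hu0 i hi) hmpos.le
      have hw₂0 : ∀ i ∈ t, 0 ≤ w₂ i := fun i hi => div_nonneg (hv0 i hi) hmpos.le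
      have hw₁1 : ∑ i ∈ t, w₁ i = 1 := by
        rw [← Finset.sum_div, ← hm, div_self hm0]
      have hw₂1 : ∑ i ∈ t, w₂ i = 1 := by
        rw [← Finset.sum_div, hmv, div_self hm0]
      have hxeq : ∑ i ∈ t, w₁ i • z i = ∑ i ∈ t, w₂ i • z i := by
        show ∑ i ∈ t, (u i / m) • z i = ∑ i ∈ t, (v i / m) • z i
        simp only [div_eq_inv_mul, mul_smul, ← Finset.smul_sum, huvz]
      have e1 := stmt3_comb hA hf t z w₁ hw₁0 hw₁1 hz
      have e2 := stmt3_comb hA hf t z w₂ hw₂0 hw₂1 hz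
      have : ∑ i ∈ t, w₁ i • f (z i) = ∑ i ∈ t, w₂ i • f (z i) := by
        rw [← e1, ← e2, hxeq]
      have := congrArg (fun x => m • x) this
      simpa [w₁, w₂, Finset.smul_sum, smul_smul, mul_div_cancel₀ _ hm0] using this
  calc ∑ i ∈ t, c i • f (z i)
      = ∑ i ∈ t, (u i • f (z i) - v i • f (z i)) :=
        Finset.sum_congr rfl fun i _ => by rw [hcuv i, sub_smul]
    _ = 0 := by rw [Finset.sum_sub_distrib, goal', sub_self]

lemma stmt3_sumaux {M : Type*} [AddCommGroup M] [Module ℝ M] {ι : Type*} [DecidableEq ι]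
    (l : ι →₀ ℝ) (a₀' : ι) (y : ι → M) :
    ∑ a ∈ insert a₀' l.support,
        (l a - if a = a₀' then (∑ b ∈ l.support, l b) else 0) • y a
      = ∑ a ∈ l.support, l a • (y a - y a₀') := by
  simp only [sub_smul, ite_smul, zero_smul, Finset.sum_sub_distrib, smul_sub]
  congr 1
  · exact Finset.sum_insert_of_eq_zero_if_notMem
      (fun h => by rw [Finsupp.notMem_support_iff.mp h, zero_smul])
  · rw [Finset.sum_ite_eq' (insert a₀' l.support) a₀'
        (fun a => (∑ b ∈ l.support, l b) • y a)]
    rw [if_pos (Finset.mem_insert_self _ _), ← Finset.sum_smul]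

theorem stmt_3 (V W : Type*) [AddCommGroup V] [Module ℝ V] [AddCommGroup W] [Module ℝ W]
    (A : Set V) (hA : Convex ℝ A) (f : V → W)
    (hf : ∀ a ∈ A, ∀ b ∈ A, ∀ lam : ℝ, lam ∈ Set.Icc (0:ℝ) 1 →
      f ((1 - lam) • a + lam • b) = (1 - lam) • f a + lam • f b) :
    ∃ g : V →ᵃ[ℝ] W, (∀ a ∈ A, g a = f a) ∧
      ∀ g' : V →ᵃ[ℝ] W, (∀ a ∈ A, g' a = f a) →
        Set.EqOn (g' : V → W) (g : V → W) (affineSpan ℝ A : Set V) := by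
  classical
  rcases A.eq_empty_or_nonempty with rfl | ⟨a₀, ha₀⟩
  · refine ⟨AffineMap.const ℝ V (0 : W), by simp, ?_⟩
    intro g' _ x hx
    simp only [AffineSubspace.span_empty, AffineSubspace.bot_coe] at hx
    exact hx.elim
  · set F : (↥A →₀ ℝ) →ₗ[ℝ] V :=
      Finsupp.linearCombination ℝ (fun a : ↥A => (a : V) - a₀) with hF
    set G : (↥A →₀ ℝ) →ₗ[ℝ] W :=
      Finsupp.linearCombination ℝ (fun a : ↥A => f (a : V) - f a₀) with hG
    have hker : LinearMap.ker F ≤ LinearMap.ker G := by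
      intro l hl
      rw [LinearMap.mem_ker] at hl ⊢
      rw [hF, Finsupp.linearCombination_apply, Finsupp.sum] at hl
      rw [hG, Finsupp.linearCombination_apply, Finsupp.sum]
      set a₀' : ↥A := ⟨a₀, ha₀⟩ with ha₀'
      set t : Finset ↥A := insert a₀' l.support with ht
      set c : ↥A → ℝ := fun a => l a - (if a = a₀' then (∑ b ∈ l.support, l b) else 0)
        with hc
      have h1 := stmt3_sumaux l a₀' (fun a : ↥A => (a : V))
      have h2 := stmt3_sumaux l a₀' (fun a : ↥A => f (a : V))
      have h3 := stmt3_sumaux l a₀' (fun _ : ↥A => (1 : ℝ))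
      have hc0 : ∑ a ∈ t, c a = 0 := by
        have : ∑ a ∈ t, c a = ∑ a ∈ t, c a • (1 : ℝ) := by simp
        rw [this, ht, hc]
        rw [h3]; simp
      have hcz : ∑ a ∈ t, c a • (a : V) = 0 := by
        rw [ht, hc, h1]
        simpa [ha₀'] using hl
      have hrel := stmt3_rel hA hf t (fun a : ↥A => (a : V)) c
        (fun a _ => a.2) hc0 hcz
      rw [ht, hc, h2] at hrel
      simpa [ha₀'] using hrel
    obtain ⟨q, hq⟩ := Submodule.exists_isCompl (LinearMap.range F)
    set e := F.quotKerEquivRange with he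
    set φ : ↥(LinearMap.range F) →ₗ[ℝ] W :=
      ((LinearMap.ker F).liftQ G hker).comp e.symm.toLinearMap with hφdef
    have hφ : ∀ l : ↥A →₀ ℝ, φ ⟨F l, LinearMap.mem_range_self F l⟩ = G l := by
      intro l
      have h1 : e (Submodule.Quotient.mk l) = ⟨F l, LinearMap.mem_range_self F l⟩ :=
        Subtype.ext (F.quotKerEquivRange_apply_mk l)
      rw [hφdef, LinearMap.comp_apply, ← h1]
      simp [Submodule.liftQ_apply]
    set ψ : V →ₗ[ℝ] W := φ.comp (Submodule.linearProjOfIsCompl _ q hq) with hψdef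
    have hψ : ∀ x : ↥(LinearMap.range F), ψ ↑x = φ x := fun x => by
      rw [hψdef, LinearMap.comp_apply]
      exact congrArg φ (Submodule.projectionOnto_apply_left hq x)
    set g : V →ᵃ[ℝ] W :=
      { toFun := fun x => ψ (x - a₀) + f a₀
        linear := ψ
        map_vadd' := fun p v => by
          simp only [vadd_eq_add]
          rw [show v + p - a₀ = v + (p - a₀) by abel, map_add]
          abel } with hg
    have hga : ∀ a ∈ A, g a = f a := by
      intro a ha
      have h1 : F (Finsupp.single ⟨a, ha⟩ 1) = a - a₀ := by
        rw [hF, Finsupp.linearCombination_single, one_smul]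
      have h2 : G (Finsupp.single ⟨a, ha⟩ 1) = f a - f a₀ := by
        rw [hG, Finsupp.linearCombination_single, one_smul]
      have h3 : ψ (a - a₀) = f a - f a₀ := by
        have := hψ ⟨F (Finsupp.single ⟨a, ha⟩ 1), LinearMap.mem_range_self F _⟩
        rw [hφ] at this
        rw [← h1, this, h2]
      show ψ (a - a₀) + f a₀ = f a
      rw [h3]; abel
    refine ⟨g, hga, ?_⟩
    intro g' hg' x hx
    refine affineSpan_induction (k := ℝ) (p := fun y => g' y = g y) hx
      (fun y hy => (hg' y hy).trans (hga y hy).symm) ?_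
    intro c u v w hu hv hw
    have key : ∀ h : V →ᵃ[ℝ] W, h (c • (u -ᵥ v) +ᵥ w) = c • (h u - h v) + h w := by
      intro h
      rw [AffineMap.map_vadd, LinearMap.map_smul, AffineMap.linearMap_vsub]
      simp [vsub_eq_sub, vadd_eq_add]
    rw [key g', key g, hu, hv, hw]
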